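/- In the hardness-reduction game G associated with a 3-CNF formula φ with n−1 variables and ℓ clauses, if there is a variable assignment satisfying at least (1−β)·ℓ clauses, then there exists a fixed defender strategy f (a function from states to actions) whose expected average per-round payoff against the randomized oblivious adversary A_R satisfies E_R[avg-payoff(f, A_R, G, n)] ≥ (1−β)/n. -/

import Mathlib

/-- States of the hardness-reduction game: the last `m` outcomes `Õ`
(a bit string, encoding the current variable) together with the flag `Ô`
recording whether a reward was just received. -/
abbrev GState (m : ℕ) := (Fin m → Bool) × Bool

abbrev DefAct := Fin 3

abbrev AdvAct := Bool × Fin 4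

/-- Transition: the new outcome `Õ` is the first component of the adversary's
action, and `Ô = 1` iff the defender played `2` or matched the adversary's
second component. -/
def step {m : ℕ} (σ : GState m) (d : DefAct) (a : AdvAct) : GState m :=
  (fun j => if h : j.val = 0 then a.1 else σ.1 ⟨j.val - 1, by have := j.isLt; omega⟩,
   decide (d = 2 ∨ d.val = a.2.val))

/-- Payoff: `−1` if `Ô = 1`, the defender plays `d ≠ 2` and the adversary's
second component is not the reset action `3`; `+1` if `Ô = 0` and the defender
matches the adversary's second component with `d ≠ 2`; `0` otherwise. -/
def pay {m : ℕ} (σ : GState m) (d : DefAct) (a : AdvAct) : ℝ :=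
  if σ.2 = true ∧ d ≠ 2 ∧ a.2 ≠ 3 then -1
  else if d ≠ 2 ∧ d.val = a.2.val ∧ σ.2 = false then 1
  else 0

/-- State trajectory when the defender plays the fixed strategy `f`. -/
def states {m : ℕ} (f : GState m → DefAct) (adv : ℕ → AdvAct) (σ0 : GState m) :
    ℕ → GState m
  | 0 => σ0
  | t + 1 => step (states f adv σ0 t) (f (states f adv σ0 t)) (adv t)

/-- Total payoff of the fixed strategy `f` over `T` rounds. -/
def totalPay {m : ℕ} (f : GState m → DefAct) (adv : ℕ → AdvAct) (σ0 : GState m)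
    (T : ℕ) : ℝ :=
  ∑ t ∈ Finset.range T, pay (states f adv σ0 t) (f (states f adv σ0 t)) (adv t)

/-- The oblivious adversary for a chosen clause `c` (a clause is a partial
assignment: `c i = some b` means the literal on variable `x_i` with polarity
`b` occurs in `c`): it plays the De Bruijn bit `s_i` in the first component,
and in the second component the reset action `3` at the start of the phase,
`1` if `x_i ∈ c`, `0` if `¬x_i ∈ c`, and `2` otherwise. -/
def advAction (m : ℕ) (s : ℕ → Bool) (c : Fin (2 ^ m) → Option Bool) (t : ℕ) :
    AdvAct :=
  (s (t % 2 ^ m),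
   if t % 2 ^ m = 0 then 3
   else
     match c ⟨t % 2 ^ m, Nat.mod_lt _ (by positivity)⟩ with
     | some true => 1
     | some false => 0
     | none => 2)

/-- Initial state: as if the De Bruijn sequence had been played forever. -/
def initState (m : ℕ) (s : ℕ → Bool) : GState m :=
  (fun j => s ((2 ^ m - 1 - j.val) % 2 ^ m), false)


/-- The De Bruijn pattern of the last `m` bits as of position `i`. -/
def patF (m : ℕ) (s : ℕ → Bool) (i : ℕ) : Fin m → Bool :=
  fun j => s ((i + 2 ^ m - 1 - j.val) % 2 ^ m)

/-- Whether clause `c` is satisfied by `v` at position `t`. -/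
def satB (m : ℕ) (c : Fin (2 ^ m) → Option Bool) (v : Fin (2 ^ m) → Bool) (t : ℕ) : Bool :=
  if h : t < 2 ^ m then decide (c ⟨t, h⟩ = some (v ⟨t, h⟩)) else false

/-- Whether a reward has been collected strictly before time `t`. -/
def bB (m : ℕ) (c : Fin (2 ^ m) → Option Bool) (v : Fin (2 ^ m) → Bool) : ℕ → Bool
  | 0 => false
  | t + 1 => bB m c v t || satB m c v t

open Classical in
/-- The fixed defender strategy induced by the assignment `v`. -/
noncomputable def stratF (m : ℕ) (s : ℕ → Bool) (v : Fin (2 ^ m) → Bool)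
    (σ : GState m) : DefAct :=
  if σ.2 then 2
  else if h : ∃ i : Fin (2 ^ m), patF m s i.val = σ.1 then
    (if v h.choose then 1 else 0) else 0

lemma step_fst (m : ℕ) (s : ℕ → Bool) (σ2 : Bool) (d : DefAct) (a : AdvAct) (t : ℕ)
    (ht : t < 2 ^ m) (ha : a.1 = s (t % 2 ^ m)) :
    (step (patF m s t, σ2) d a).1 = patF m s (t + 1) := by
  have hm : m < 2 ^ m := Nat.lt_two_pow_self (n := m)
  funext j
  show (if _ : j.val = 0 then a.1
      else patF m s t ⟨j.val - 1, by have := j.isLt; omega⟩) = patF m s (t + 1) j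
  by_cases hj : j.val = 0
  · rw [dif_pos hj, ha]
    show s (t % 2 ^ m) = s ((t + 1 + 2 ^ m - 1 - j.val) % 2 ^ m)
    have h1 : t + 1 + 2 ^ m - 1 - j.val = t + 2 ^ m := by omega
    rw [h1, Nat.add_mod_right]
  · rw [dif_neg hj]
    show s ((t + 2 ^ m - 1 - (j.val - 1)) % 2 ^ m) = s ((t + 1 + 2 ^ m - 1 - j.val) % 2 ^ m)
    have hjm : j.val < m := j.isLt
    have h1 : t + 2 ^ m - 1 - (j.val - 1) = t + 1 + 2 ^ m - 1 - j.val := by omega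
    rw [h1]

lemma adv_snd_pos (m : ℕ) (s : ℕ → Bool) (c : Fin (2 ^ m) → Option Bool) (t : ℕ)
    (ht : t < 2 ^ m) (ht0 : t ≠ 0) :
    (advAction m s c t).2 =
      (match c ⟨t, ht⟩ with
       | some true => 1
       | some false => 0
       | none => 2 : Fin 4) := by
  have hmod : t % 2 ^ m = t := Nat.mod_eq_of_lt ht
  show (if t % 2 ^ m = 0 then (3 : Fin 4)
      else match c ⟨t % 2 ^ m, Nat.mod_lt _ (by positivity)⟩ with
       | some true => 1 | some false => 0 | none => 2) = _
  rw [if_neg (by rw [hmod]; exact ht0)]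
  have he : (⟨t % 2 ^ m, Nat.mod_lt _ (by positivity)⟩ : Fin (2 ^ m)) = ⟨t, ht⟩ :=
    Fin.ext hmod
  rw [he]

lemma strat_false (m : ℕ) (s : ℕ → Bool) (v : Fin (2 ^ m) → Bool)
    (hDB : Function.Injective fun i : Fin (2 ^ m) => patF m s i.val)
    (t : ℕ) (ht : t < 2 ^ m) :
    stratF m s v (patF m s t, false) = (if v ⟨t, ht⟩ then 1 else 0) := by
  have hex : ∃ i : Fin (2 ^ m), patF m s i.val = patF m s t := ⟨⟨t, ht⟩, rfl⟩
  have hch : hex.choose = ⟨t, ht⟩ := hDB hex.choose_spec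
  show (if False then (2 : DefAct) else _) = _
  rw [if_neg (by simp)]
  rw [dif_pos hex, hch]

lemma strat_match (m : ℕ) (s : ℕ → Bool) (v : Fin (2 ^ m) → Bool)
    (c : Fin (2 ^ m) → Option Bool)
    (hDB : Function.Injective fun i : Fin (2 ^ m) => patF m s i.val)
    (hc0 : c ⟨0, by positivity⟩ = none)
    (t : ℕ) (ht : t < 2 ^ m) :
    (stratF m s v (patF m s t, false) ≠ 2) ∧
    (decide (stratF m s v (patF m s t, false) = 2 ∨
        (stratF m s v (patF m s t, false)).val = (advAction m s c t).2.val) = satB m c v t) ∧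
    ((stratF m s v (patF m s t, false)).val = (advAction m s c t).2.val ↔
        satB m c v t = true) := by
  have hd : stratF m s v (patF m s t, false) = (if v ⟨t, ht⟩ then 1 else 0) :=
    strat_false m s v hDB t ht
  have hsat : satB m c v t = decide (c ⟨t, ht⟩ = some (v ⟨t, ht⟩)) := dif_pos ht
  rw [hd, hsat]
  by_cases ht0 : t = 0
  · subst ht0
    have hadv : (advAction m s c 0).2 = 3 := by simp [advAction]
    have hc0' : c ⟨0, ht⟩ = none := by
      have he : (⟨0, ht⟩ : Fin (2 ^ m)) = ⟨0, by positivity⟩ := rfl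
      rw [he, hc0]
    rw [hadv, hc0']
    cases hv : v ⟨0, ht⟩ <;> simp <;> decide
  · have hadv := adv_snd_pos m s c t ht ht0
    rw [hadv]
    rcases hc : c ⟨t, ht⟩ with _ | b
    · cases hv : v ⟨t, ht⟩ <;> simp <;> decide
    · cases b <;> cases hv : v ⟨t, ht⟩ <;> simp <;> decide

lemma state_eq (m : ℕ) (s : ℕ → Bool) (v : Fin (2 ^ m) → Bool)
    (c : Fin (2 ^ m) → Option Bool)
    (hDB : Function.Injective fun i : Fin (2 ^ m) => patF m s i.val)
    (hc0 : c ⟨0, by positivity⟩ = none) :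
    ∀ t, t < 2 ^ m →
      states (stratF m s v) (advAction m s c) (initState m s) t = (patF m s t, bB m c v t) := by
  intro t
  induction t with
  | zero =>
    intro _
    refine Prod.ext (funext fun j => ?_) rfl
    show s ((2 ^ m - 1 - j.val) % 2 ^ m) = s ((0 + 2 ^ m - 1 - j.val) % 2 ^ m)
    rw [Nat.zero_add]
  | succ t ih =>
    intro ht1
    have ht : t < 2 ^ m := Nat.lt_of_succ_lt ht1
    have hst := ih ht
    show step _ _ _ = _
    rw [hst]
    have ha1 : (advAction m s c t).1 = s (t % 2 ^ m) := rfl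
    have hb1 : bB m c v (t + 1) = (bB m c v t || satB m c v t) := rfl
    cases hbt : bB m c v t
    · obtain ⟨hd2, hdec, _⟩ := strat_match m s v c hDB hc0 t ht
      refine Prod.ext (step_fst m s false _ _ t ht ha1) ?_
      show decide (stratF m s v (patF m s t, false) = 2 ∨
          (stratF m s v (patF m s t, false)).val = (advAction m s c t).2.val)
        = bB m c v (t + 1)
      rw [hb1, hbt, Bool.false_or]
      exact hdec
    · have hf : stratF m s v (patF m s t, true) = 2 := rfl
      rw [hf]
      refine Prod.ext (step_fst m s true 2 _ t ht ha1) ?_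
      show decide ((2 : DefAct) = 2 ∨ (2 : DefAct).val = (advAction m s c t).2.val)
        = bB m c v (t + 1)
      rw [hb1, hbt, Bool.true_or]
      simp

lemma pay_eq (m : ℕ) (s : ℕ → Bool) (v : Fin (2 ^ m) → Bool)
    (c : Fin (2 ^ m) → Option Bool)
    (hDB : Function.Injective fun i : Fin (2 ^ m) => patF m s i.val)
    (hc0 : c ⟨0, by positivity⟩ = none)
    (t : ℕ) (ht : t < 2 ^ m) :
    pay (patF m s t, bB m c v t) (stratF m s v (patF m s t, bB m c v t)) (advAction m s c t)
      = (if bB m c v t = false ∧ satB m c v t = true then (1 : ℝ) else 0) := by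
  cases hbt : bB m c v t
  · obtain ⟨hd2, _, hiff⟩ := strat_match m s v c hDB hc0 t ht
    unfold pay
    rw [if_neg (by simp)]
    by_cases hs : satB m c v t = true
    · rw [if_pos ⟨hd2, hiff.mpr hs, rfl⟩, if_pos ⟨rfl, hs⟩]
    · rw [if_neg (fun h => hs (hiff.mp h.2.1)), if_neg (fun h => hs h.2)]
  · have hf : stratF m s v (patF m s t, true) = 2 := rfl
    rw [hf]
    unfold pay
    rw [if_neg (by simp), if_neg (by simp), if_neg (by simp)]

lemma bB_false (m : ℕ) (c : Fin (2 ^ m) → Option Bool) (v : Fin (2 ^ m) → Bool) :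
    ∀ t, (∀ u, u < t → satB m c v u = false) → bB m c v t = false := by
  intro t
  induction t with
  | zero => intro _; rfl
  | succ t ih =>
    intro h
    show (bB m c v t || satB m c v t) = false
    rw [ih (fun u hu => h u (Nat.lt_succ_of_lt hu)), h t (Nat.lt_succ_self t)]
    rfl

lemma clause_payoff (m : ℕ) (s : ℕ → Bool) (v : Fin (2 ^ m) → Bool)
    (hDB : Function.Injective fun i : Fin (2 ^ m) => patF m s i.val)
    (c : Fin (2 ^ m) → Option Bool)
    (hc0 : c ⟨0, by positivity⟩ = none) :
    (if ∃ i, c i = some (v i) then (1 : ℝ) else 0) ≤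
      totalPay (stratF m s v) (advAction m s c) (initState m s) (2 ^ m) := by
  classical
  have htot : totalPay (stratF m s v) (advAction m s c) (initState m s) (2 ^ m)
      = ∑ t ∈ Finset.range (2 ^ m),
          (if bB m c v t = false ∧ satB m c v t = true then (1 : ℝ) else 0) := by
    unfold totalPay
    refine Finset.sum_congr rfl fun t htm => ?_
    have ht : t < 2 ^ m := Finset.mem_range.mp htm
    rw [state_eq m s v c hDB hc0 t ht, pay_eq m s v c hDB hc0 t ht]
  rw [htot]
  have hnonneg : ∀ t ∈ Finset.range (2 ^ m),
      (0 : ℝ) ≤ (if bB m c v t = false ∧ satB m c v t = true then (1 : ℝ) else 0) := by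
    intro t _; split <;> norm_num
  by_cases hex : ∃ i, c i = some (v i)
  · rw [if_pos hex]
    obtain ⟨i, hi⟩ := hex
    have hsi : satB m c v i.val = true := by
      unfold satB
      rw [dif_pos i.isLt]
      simp only [decide_eq_true_eq]
      have : (⟨i.val, i.isLt⟩ : Fin (2 ^ m)) = i := Fin.eta i i.isLt
      rw [this]; exact hi
    have hexn : ∃ t, satB m c v t = true := ⟨i.val, hsi⟩
    set t0 := Nat.find hexn with ht0def
    have hs0 : satB m c v t0 = true := Nat.find_spec hexn
    have ht0lt : t0 < 2 ^ m := by
      by_contra h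
      rw [satB, dif_neg h] at hs0
      exact Bool.false_ne_true hs0
    have hb0 : bB m c v t0 = false := by
      refine bB_false m c v t0 (fun u hu => ?_)
      have := Nat.find_min hexn hu
      exact Bool.eq_false_iff.mpr this
    calc (1 : ℝ) = (if bB m c v t0 = false ∧ satB m c v t0 = true then (1 : ℝ) else 0) := by
          rw [if_pos ⟨hb0, hs0⟩]
      _ ≤ _ := Finset.single_le_sum hnonneg (Finset.mem_range.mpr ht0lt)
  · rw [if_neg hex]
    exact Finset.sum_nonneg hnonneg

/-- if some assignment `v` satisfies at least `(1−β)ℓ` of the `ℓ`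
clauses, then there is a fixed defender strategy whose expected (over the
uniformly random clause choice) average per-round payoff over one phase of
`n = 2^m` rounds against the oblivious adversary is at least `(1−β)/n`.
`hDB` states that `s` is a De Bruijn sequence (distinct variables correspond to
distinct states) and `hvar0` that the variable visited at the phase-start
position occurs in no clause. -/
theorem fixed_strategy_payoff (m ℓ : ℕ) (hℓ : 0 < ℓ) (β : ℝ)
    (s : ℕ → Bool)
    (hDB : Function.Injective fun i : Fin (2 ^ m) =>
      fun j : Fin m => s ((i.val + 2 ^ m - 1 - j.val) % 2 ^ m))
    (C : Fin ℓ → Fin (2 ^ m) → Option Bool)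
    (hvar0 : ∀ jc, C jc ⟨0, by positivity⟩ = none)
    (v : Fin (2 ^ m) → Bool)
    (hsat : (1 - β) * ℓ ≤
      ((Finset.univ.filter fun jc : Fin ℓ => ∃ i, C jc i = some (v i)).card : ℝ)) :
    ∃ f : GState m → DefAct,
      (1 - β) / (2 ^ m : ℝ) ≤
        ((∑ jc : Fin ℓ, totalPay f (advAction m s (C jc)) (initState m s) (2 ^ m)) / ℓ)
          / (2 ^ m : ℝ) := by
  classical
  refine ⟨stratF m s v, ?_⟩
  have hDB' : Function.Injective fun i : Fin (2 ^ m) => patF m s i.val := hDB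
  have key : ∀ jc : Fin ℓ, (if ∃ i, C jc i = some (v i) then (1 : ℝ) else 0) ≤
      totalPay (stratF m s v) (advAction m s (C jc)) (initState m s) (2 ^ m) :=
    fun jc => clause_payoff m s v hDB' (C jc) (hvar0 jc)
  have hsum : ((Finset.univ.filter fun jc : Fin ℓ => ∃ i, C jc i = some (v i)).card : ℝ) ≤
      ∑ jc : Fin ℓ, totalPay (stratF m s v) (advAction m s (C jc)) (initState m s) (2 ^ m) := by
    rw [← Finset.sum_boole]
    exact Finset.sum_le_sum fun jc _ => key jc
  have hl : (0 : ℝ) < ℓ := by exact_mod_cast hℓ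
  have hp : (0 : ℝ) < (2 ^ m : ℝ) := by positivity
  have h1 : (1 - β) ≤
      (∑ jc : Fin ℓ, totalPay (stratF m s v) (advAction m s (C jc)) (initState m s) (2 ^ m)) / ℓ := by
    rw [le_div_iff₀ hl]
    exact le_trans hsat hsum
  gcongr
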